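/- arXiv:1506.04565 — 2 statements merged into one kernel-verified Lean document; each statement's English description precedes it below -/
import Mathlib

section
/- Let c : (ℝ^d)^N → [0, +∞] be a continuous cost function and μ₁,…,μ_N absolutely continuous Borel probability measures on ℝ^d. Suppose γ ∈ Π(μ₁,…,μ_N) is an optimal plan for the multi-marginal Monge–Kantorovich problem and that the optimal value is finite. Then γ is concentrated on a c-cyclically monotone set. -/
open MeasureTheory ENNReal

/-- Optimal plans for a continuous multi-marginal cost `c : (ℝ^d)^N → [0, +∞]` with absolutely
continuous marginals and finite optimal value are concentrated on a `c`-cyclically monotone set: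
for all `x, y` in the set and every partition `p ⊆ {1,…,N}`, exchanging the coordinates of `x`
and `y` outside `p` does not decrease the total cost. -/
theorem optimal_plan_c_cyclically_monotone {d N : ℕ}
    (c : (Fin N → EuclideanSpace ℝ (Fin d)) → ℝ≥0∞) (hc : Continuous c)
    (μ : Fin N → Measure (EuclideanSpace ℝ (Fin d))) [∀ i, IsProbabilityMeasure (μ i)]
    (hac : ∀ i, μ i ≪ volume)
    (γ : Measure (Fin N → EuclideanSpace ℝ (Fin d))) [IsProbabilityMeasure γ]
    (hmarg : ∀ i, γ.map (fun x => x i) = μ i)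
    (hopt : ∀ γ' : Measure (Fin N → EuclideanSpace ℝ (Fin d)), IsProbabilityMeasure γ' →
      (∀ i, γ'.map (fun x => x i) = μ i) → ∫⁻ x, c x ∂γ ≤ ∫⁻ x, c x ∂γ')
    (hfin : ∫⁻ x, c x ∂γ ≠ ⊤) :
    ∃ Γ : Set (Fin N → EuclideanSpace ℝ (Fin d)), γ Γᶜ = 0 ∧
      ∀ x ∈ Γ, ∀ y ∈ Γ, ∀ p : Finset (Fin N),
        c x + c y ≤ c (fun i => if i ∈ p then x i else y i) +
          c (fun i => if i ∈ p then y i else x i) := by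
  classical
  have hcm : Measurable c := hc.measurable
  -- the exchange map
  set X : Finset (Fin N) → (Fin N → EuclideanSpace ℝ (Fin d)) × (Fin N → EuclideanSpace ℝ (Fin d))
      → (Fin N → EuclideanSpace ℝ (Fin d)) :=
    fun p z i => if i ∈ p then z.1 i else z.2 i with hX
  have hXcont : ∀ p : Finset (Fin N), Continuous (X p) := by
    intro p
    refine continuous_pi fun i => ?_
    by_cases h : i ∈ p <;> simp only [hX, h, if_true, if_false] <;> fun_prop
  -- the "improvement" sets
  set A : Finset (Fin N) →
      Set ((Fin N → EuclideanSpace ℝ (Fin d)) × (Fin N → EuclideanSpace ℝ (Fin d))) :=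
    fun p => {z | c (X p z) + c (X p z.swap) < c z.1 + c z.2} with hAdef
  have hXmeas : ∀ p : Finset (Fin N), Measurable (X p) := by
    intro p
    refine measurable_pi_lambda _ fun i => ?_
    by_cases h : i ∈ p <;> simp only [hX, h, if_true, if_false]
    · exact (measurable_pi_apply i).comp measurable_fst
    · exact (measurable_pi_apply i).comp measurable_snd
  have hAopen : ∀ p, IsOpen (A p) := by
    intro p
    exact isOpen_lt
      (((hc.comp (hXcont p)).add (hc.comp ((hXcont p).comp continuous_swap))))
      ((hc.comp continuous_fst).add (hc.comp continuous_snd))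
  set m : Measure ((Fin N → EuclideanSpace ℝ (Fin d)) × (Fin N → EuclideanSpace ℝ (Fin d))) :=
    γ.prod γ with hm
  have hfst : m.map Prod.fst = γ := by
    rw [hm, Measure.map_fst_prod]; simp
  have hsnd : m.map Prod.snd = γ := by
    rw [hm, Measure.map_snd_prod]; simp
  have hev : ∀ i : Fin N, Measurable fun x : Fin N → EuclideanSpace ℝ (Fin d) => x i :=
    fun i => measurable_pi_apply i
  have hf1 : ∀ i : Fin N, Measurable fun z :
      (Fin N → EuclideanSpace ℝ (Fin d)) × (Fin N → EuclideanSpace ℝ (Fin d)) => z.1 i :=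
    fun i => (hev i).comp measurable_fst
  have hf2 : ∀ i : Fin N, Measurable fun z :
      (Fin N → EuclideanSpace ℝ (Fin d)) × (Fin N → EuclideanSpace ℝ (Fin d)) => z.2 i :=
    fun i => (hev i).comp measurable_snd
  -- key step: each A p is (γ × γ)-null
  have hAnull : ∀ p, m (A p) = 0 := by
    intro p
    by_contra hA
    have hAmeas : MeasurableSet (A p) := (hAopen p).measurableSet
    set S := fun z : (Fin N → EuclideanSpace ℝ (Fin d)) × (Fin N → EuclideanSpace ℝ (Fin d)) =>
      (X p z, X p z.swap) with hS
    have hSmeas : Measurable S :=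
      (hXmeas p).prodMk ((hXmeas p).comp measurable_swap)
    have hcf1 : Measurable fun z : (Fin N → EuclideanSpace ℝ (Fin d)) ×
        (Fin N → EuclideanSpace ℝ (Fin d)) => c z.1 := hcm.comp measurable_fst
    have hcf2 : Measurable fun z : (Fin N → EuclideanSpace ℝ (Fin d)) ×
        (Fin N → EuclideanSpace ℝ (Fin d)) => c z.2 := hcm.comp measurable_snd
    have hcX : Measurable fun z : (Fin N → EuclideanSpace ℝ (Fin d)) ×
        (Fin N → EuclideanSpace ℝ (Fin d)) => c (X p z) := hcm.comp (hXmeas p)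
    have hcXs : Measurable fun z : (Fin N → EuclideanSpace ℝ (Fin d)) ×
        (Fin N → EuclideanSpace ℝ (Fin d)) => c (X p z.swap) :=
      hcm.comp ((hXmeas p).comp measurable_swap)
    set m' := m.restrict (A p)ᶜ + (m.restrict (A p)).map S with hm'
    set γ' := (2 : ℝ≥0∞)⁻¹ • (m'.map Prod.fst + m'.map Prod.snd) with hγ'
    have hsplit : ∀ f : (Fin N → EuclideanSpace ℝ (Fin d)) × (Fin N → EuclideanSpace ℝ (Fin d))
        → EuclideanSpace ℝ (Fin d), Measurable f →
        (m.restrict (A p)ᶜ).map f + (m.restrict (A p)).map f = m.map f := by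
      intro f hf
      rw [← Measure.map_add _ _ hf]
      congr 1
      have := Measure.restrict_add_restrict_compl (μ := m) hAmeas.compl
      rwa [compl_compl] at this
    have hmap1 : ∀ i, m.map (fun z => z.1 i) = μ i := by
      intro i
      have h1 : (fun z : (Fin N → EuclideanSpace ℝ (Fin d)) ×
          (Fin N → EuclideanSpace ℝ (Fin d)) => z.1 i)
          = (fun x : Fin N → EuclideanSpace ℝ (Fin d) => x i) ∘ Prod.fst := rfl
      rw [h1, ← Measure.map_map (hev i) measurable_fst, hfst, hmarg i]
    have hmap2 : ∀ i, m.map (fun z => z.2 i) = μ i := by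
      intro i
      have h1 : (fun z : (Fin N → EuclideanSpace ℝ (Fin d)) ×
          (Fin N → EuclideanSpace ℝ (Fin d)) => z.2 i)
          = (fun x : Fin N → EuclideanSpace ℝ (Fin d) => x i) ∘ Prod.snd := rfl
      rw [h1, ← Measure.map_map (hev i) measurable_snd, hsnd, hmarg i]
    -- marginals of the competitor plan
    have hmarg' : ∀ i, γ'.map (fun x => x i) = μ i := by
      intro i
      have step1 : γ'.map (fun x => x i)
          = (2 : ℝ≥0∞)⁻¹ • (m'.map (fun z => z.1 i) + m'.map (fun z => z.2 i)) := by
        rw [hγ', Measure.map_smul, Measure.map_add _ _ (hev i),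
          Measure.map_map (hev i) measurable_fst, Measure.map_map (hev i) measurable_snd]
        rfl
      have hmapS1 : ((m.restrict (A p)).map S).map (fun z => z.1 i)
          = (m.restrict (A p)).map (fun z => if i ∈ p then z.1 i else z.2 i) := by
        rw [Measure.map_map (hf1 i) hSmeas]; rfl
      have hmapS2 : ((m.restrict (A p)).map S).map (fun z => z.2 i)
          = (m.restrict (A p)).map (fun z => if i ∈ p then z.2 i else z.1 i) := by
        rw [Measure.map_map (hf2 i) hSmeas]; rfl
      have hsum : m'.map (fun z => z.1 i) + m'.map (fun z => z.2 i)
          = m.map (fun z => z.1 i) + m.map (fun z => z.2 i) := by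
        rw [hm', Measure.map_add _ _ (hf1 i), Measure.map_add _ _ (hf2 i), hmapS1, hmapS2]
        by_cases hi : i ∈ p
        · simp only [hi, if_true]
          rw [show (m.restrict (A p)ᶜ).map (fun z => z.1 i)
              + (m.restrict (A p)).map (fun z => z.1 i)
              + ((m.restrict (A p)ᶜ).map (fun z => z.2 i)
              + (m.restrict (A p)).map (fun z => z.2 i))
              = ((m.restrict (A p)ᶜ).map (fun z => z.1 i)
              + (m.restrict (A p)).map (fun z => z.1 i))
              + ((m.restrict (A p)ᶜ).map (fun z => z.2 i)
              + (m.restrict (A p)).map (fun z => z.2 i)) from rfl]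
          rw [hsplit _ (hf1 i), hsplit _ (hf2 i)]
        · simp only [hi, if_false]
          rw [show (m.restrict (A p)ᶜ).map (fun z => z.1 i)
              + (m.restrict (A p)).map (fun z => z.2 i)
              + ((m.restrict (A p)ᶜ).map (fun z => z.2 i)
              + (m.restrict (A p)).map (fun z => z.1 i))
              = ((m.restrict (A p)ᶜ).map (fun z => z.1 i)
              + (m.restrict (A p)).map (fun z => z.1 i))
              + ((m.restrict (A p)ᶜ).map (fun z => z.2 i)
              + (m.restrict (A p)).map (fun z => z.2 i)) from by abel]
          rw [hsplit _ (hf1 i), hsplit _ (hf2 i)]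
      rw [step1, hsum, hmap1 i, hmap2 i, ← two_smul ℝ≥0∞ (μ i), smul_smul,
        ENNReal.inv_mul_cancel two_ne_zero ofNat_ne_top, one_smul]
    -- competitor is a probability measure
    have hm'univ : m' Set.univ = 1 := by
      rw [hm', Measure.add_apply, Measure.restrict_apply_univ,
        Measure.map_apply hSmeas MeasurableSet.univ, Set.preimage_univ,
        Measure.restrict_apply_univ, add_comm, measure_add_measure_compl hAmeas]
      exact measure_univ
    have hγ'prob : IsProbabilityMeasure γ' := by
      constructor
      rw [hγ', Measure.smul_apply, Measure.add_apply,
        Measure.map_apply measurable_fst MeasurableSet.univ,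
        Measure.map_apply measurable_snd MeasurableSet.univ,
        Set.preimage_univ, Set.preimage_univ, hm'univ, smul_eq_mul]
      norm_num
      exact ENNReal.inv_mul_cancel two_ne_zero ofNat_ne_top
    -- cost of the competitor plan
    have hint1 : ∫⁻ z, c z.1 ∂m = ∫⁻ x, c x ∂γ := by
      rw [← hfst, lintegral_map hcm measurable_fst]
    have hint2 : ∫⁻ z, c z.2 ∂m = ∫⁻ x, c x ∂γ := by
      rw [← hsnd, lintegral_map hcm measurable_snd]
    have e1 : ∫⁻ z, c z.1 ∂m' = (∫⁻ z in (A p)ᶜ, c z.1 ∂m) + ∫⁻ z in A p, c (X p z) ∂m := by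
      rw [hm', lintegral_add_measure, lintegral_map hcf1 hSmeas]
    have e2 : ∫⁻ z, c z.2 ∂m'
        = (∫⁻ z in (A p)ᶜ, c z.2 ∂m) + ∫⁻ z in A p, c (X p z.swap) ∂m := by
      rw [hm', lintegral_add_measure, lintegral_map hcf2 hSmeas]
    have hcost' : ∫⁻ x, c x ∂γ' = (2 : ℝ≥0∞)⁻¹ *
        ((∫⁻ z in (A p)ᶜ, (c z.1 + c z.2) ∂m)
          + ∫⁻ z in A p, (c (X p z) + c (X p z.swap)) ∂m) := by
      rw [hγ', lintegral_smul_measure, lintegral_add_measure,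
        lintegral_map hcm measurable_fst, lintegral_map hcm measurable_snd, e1, e2]
      congr 1
      rw [lintegral_add_left hcf1, lintegral_add_left hcX]
      abel
    have hcost : (2 : ℝ≥0∞) * ∫⁻ x, c x ∂γ =
        (∫⁻ z in (A p)ᶜ, (c z.1 + c z.2) ∂m) + ∫⁻ z in A p, (c z.1 + c z.2) ∂m := by
      rw [add_comm, lintegral_add_compl _ hAmeas, lintegral_add_left hcf1, hint1, hint2,
        two_mul]
    -- optimality gives an integral inequality on A p
    have hle := hopt γ' hγ'prob hmarg'
    rw [hcost'] at hle
    have hle2 : (2 : ℝ≥0∞) * ∫⁻ x, c x ∂γ ≤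
        (∫⁻ z in (A p)ᶜ, (c z.1 + c z.2) ∂m)
          + ∫⁻ z in A p, (c (X p z) + c (X p z.swap)) ∂m := by
      calc (2 : ℝ≥0∞) * ∫⁻ x, c x ∂γ ≤ 2 * ((2 : ℝ≥0∞)⁻¹ *
          ((∫⁻ z in (A p)ᶜ, (c z.1 + c z.2) ∂m)
            + ∫⁻ z in A p, (c (X p z) + c (X p z.swap)) ∂m)) :=
          mul_le_mul_right hle 2
        _ = _ := by
          rw [← mul_assoc, ENNReal.mul_inv_cancel two_ne_zero ofNat_ne_top, one_mul]
    rw [hcost] at hle2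
    have hfull_ne : (∫⁻ z, (c z.1 + c z.2) ∂m) ≠ ⊤ := by
      rw [lintegral_add_left hcf1, hint1, hint2]
      exact ENNReal.add_ne_top.2 ⟨hfin, hfin⟩
    have hcompl_ne : (∫⁻ z in (A p)ᶜ, (c z.1 + c z.2) ∂m) ≠ ⊤ :=
      ne_top_of_le_ne_top hfull_ne (lintegral_mono' Measure.restrict_le_self le_rfl)
    have hkey : (∫⁻ z in A p, (c z.1 + c z.2) ∂m)
        ≤ ∫⁻ z in A p, (c (X p z) + c (X p z.swap)) ∂m :=
      (ENNReal.add_le_add_iff_left hcompl_ne).1 hle2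
    -- but the swapped cost is strictly smaller on A p : contradiction
    have hltAE : ∀ᵐ z ∂m, z ∈ A p →
        c (X p z) + c (X p z.swap) < c z.1 + c z.2 :=
      Filter.Eventually.of_forall fun z hz => hz
    have hgA_ne : (∫⁻ z in A p, (c z.1 + c z.2) ∂m) ≠ ⊤ :=
      ne_top_of_le_ne_top hfull_ne (lintegral_mono' Measure.restrict_le_self le_rfl)
    have hfiA : (∫⁻ z in A p, (c (X p z) + c (X p z.swap)) ∂m) ≠ ⊤ := by
      refine ne_top_of_le_ne_top hgA_ne (lintegral_mono_ae ?_)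
      exact (ae_restrict_iff' hAmeas).2
        (Filter.Eventually.of_forall fun z hz =>
          (le_of_lt (hz : c (X p z) + c (X p z.swap) < c z.1 + c z.2)))
    have hstrict := setLIntegral_strict_mono hAmeas hA (hcf1.add hcf2) hfiA hltAE
    exact absurd hkey (not_le.2 hstrict)
  -- Γ := points all of whose neighborhoods have positive measure
  refine ⟨{x | ∀ U : Set (Fin N → EuclideanSpace ℝ (Fin d)), IsOpen U → x ∈ U → γ U ≠ 0},
    ?_, ?_⟩
  · obtain ⟨B, hBc, -, hB⟩ :=
      TopologicalSpace.exists_countable_basis (Fin N → EuclideanSpace ℝ (Fin d))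
    have hsub : {x | ∀ U : Set (Fin N → EuclideanSpace ℝ (Fin d)),
        IsOpen U → x ∈ U → γ U ≠ 0}ᶜ ⊆ ⋃ U ∈ {U ∈ B | γ U = 0}, U := by
      intro x hx
      simp only [Set.mem_compl_iff, Set.mem_setOf_eq, not_forall] at hx
      obtain ⟨U, hU, hxU, h0⟩ := hx
      rw [not_ne_iff] at h0
      obtain ⟨b, hbB, hxb, hbU⟩ := hB.exists_subset_of_mem_open hxU hU
      exact Set.mem_biUnion ⟨hbB, measure_mono_null hbU h0⟩ hxb
    refine measure_mono_null hsub ((measure_biUnion_null_iff ?_).2 fun U hU => hU.2)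
    exact hBc.mono (Set.sep_subset _ _)
  · intro x hx y hy p
    by_contra hcon
    push_neg at hcon
    have hmem : (x, y) ∈ A p := hcon
    obtain ⟨U, V, hU, hV, hxU, hyV, hUV⟩ := isOpen_prod_iff.1 (hAopen p) x y hmem
    have h0 : γ.prod γ (U ×ˢ V) = 0 := measure_mono_null hUV (hAnull p)
    rw [Measure.prod_prod] at h0
    rcases mul_eq_zero.1 h0 with h | h
    · exact hx U hU hxU h
    · exact hy V hV hyV h
end

section
/- Let μ be a Borel probability measure on ℝ^d that is absolutely continuous with respect to Lebesgue measure, and let c : (ℝ^d)^N → ℝ be a continuous cost function that is symmetric, i.e. invariant under every permutation of its N arguments. Then the infimum of ∫ c dγ over all γ ∈ Π_N(μ) equals the infimum of ∫ c dγ over all cyclically symmetric γ ∈ Π_N^{sym}(μ). -/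
open MeasureTheory ENNReal

private lemma shift_meas {d N : ℕ} [NeZero N] (k : Fin N) :
    Measurable (fun x : Fin N → EuclideanSpace ℝ (Fin d) => fun i => x (i + k)) :=
  measurable_pi_lambda _ fun _ => measurable_pi_apply _

private lemma map_sum_meas {α β ι : Type*} [MeasurableSpace α] [MeasurableSpace β]
    (s : Finset ι) (μ : ι → Measure α) {f : α → β} (hf : Measurable f) :
    (∑ i ∈ s, μ i).map f = ∑ i ∈ s, (μ i).map f := by
  ext t ht
  simp [Measure.map_apply hf ht, Measure.finset_sum_apply]

/-- For a continuous symmetric cost and an absolutely continuous probability marginal `μ`, the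
multi-marginal Monge–Kantorovich infimum over all plans in `Π_N(μ)` equals the infimum over
cyclically symmetric plans in `Π_N^{sym}(μ)`. -/
theorem inf_plans_eq_inf_symmetric_plans {d N : ℕ} [NeZero N]
    (μ : Measure (EuclideanSpace ℝ (Fin d))) [IsProbabilityMeasure μ] (hac : μ ≪ volume)
    (c : (Fin N → EuclideanSpace ℝ (Fin d)) → ℝ) (hc : Continuous c)
    (hsym : ∀ (σ : Equiv.Perm (Fin N)) (x : Fin N → EuclideanSpace ℝ (Fin d)), c (x ∘ σ) = c x) :
    sInf {r : ℝ | ∃ γ : Measure (Fin N → EuclideanSpace ℝ (Fin d)),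
        IsProbabilityMeasure γ ∧ (∀ i, γ.map (fun x => x i) = μ) ∧ r = ∫ x, c x ∂γ}
      = sInf {r : ℝ | ∃ γ : Measure (Fin N → EuclideanSpace ℝ (Fin d)),
        IsProbabilityMeasure γ ∧ γ.map (fun x i => x (i + 1)) = γ ∧
        γ.map (fun x => x 0) = μ ∧ r = ∫ x, c x ∂γ} := by
  congr 1
  ext r
  simp only [Set.mem_setOf_eq]
  constructor
  · -- given an arbitrary plan, symmetrize it
    rintro ⟨γ, hγp, hmarg, hr⟩
    have hNne : (N : ℝ≥0∞) ≠ 0 := by simpa using (NeZero.ne N)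
    have hNtop : (N : ℝ≥0∞) ≠ ⊤ := natCast_ne_top N
    have hcshift : ∀ (k : Fin N) (x : Fin N → EuclideanSpace ℝ (Fin d)),
        c (fun i => x (i + k)) = c x := by
      intro k x
      simpa [Function.comp_def] using hsym (Equiv.addRight k) x
    have hγk_prob : ∀ k : Fin N,
        IsProbabilityMeasure (γ.map (fun x i => x (i + k))) :=
      fun k => Measure.isProbabilityMeasure_map (shift_meas k).aemeasurable
    have hint : ∀ k : Fin N,
        ∫ x, c x ∂(γ.map (fun x i => x (i + k))) = ∫ x, c x ∂γ := by
      intro k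
      rw [integral_map (shift_meas k).aemeasurable hc.aestronglyMeasurable]
      exact integral_congr_ae (Filter.Eventually.of_forall fun x => hcshift k x)
    have hint_iff : ∀ k : Fin N,
        Integrable c (γ.map (fun x i => x (i + k))) ↔ Integrable c γ := by
      intro k
      rw [integrable_map_measure hc.aestronglyMeasurable (shift_meas k).aemeasurable]
      constructor
      · intro h; exact h.congr (Filter.Eventually.of_forall fun x => hcshift k x)
      · intro h; exact h.congr (Filter.Eventually.of_forall fun x => (hcshift k x).symm)
    refine ⟨(N : ℝ≥0∞)⁻¹ • ∑ k : Fin N, γ.map (fun x i => x (i + k)), ?_, ?_, ?_, ?_⟩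
    · constructor
      simp only [Measure.smul_apply, Measure.finset_sum_apply, smul_eq_mul]
      have : ∀ k : Fin N, (γ.map (fun x i => x (i + k))) Set.univ = 1 :=
        fun k => (hγk_prob k).measure_univ
      simp only [this, Finset.sum_const, Finset.card_univ, Fintype.card_fin, nsmul_eq_mul,
        mul_one]
      exact ENNReal.inv_mul_cancel hNne hNtop
    · -- cyclic invariance
      have hmapk : ∀ k : Fin N,
          (γ.map (fun x i => x (i + k))).map (fun x i => x (i + 1))
            = γ.map (fun x i => x (i + (k + 1))) := by
        intro k
        rw [Measure.map_map (shift_meas 1) (shift_meas k)]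
        congr 1
        funext x
        funext i
        show x (i + 1 + k) = x (i + (k + 1))
        rw [add_assoc, add_comm 1 k]
      rw [Measure.map_smul, map_sum_meas _ _ (shift_meas 1)]
      congr 1
      rw [Finset.sum_congr rfl (fun k _ => hmapk k)]
      exact Fintype.sum_equiv (Equiv.addRight 1) _ _ (fun k => rfl)
    · -- marginal 0
      have h0 : ∀ k : Fin N, (γ.map (fun x i => x (i + k))).map (fun x => x 0) = μ := by
        intro k
        rw [Measure.map_map (measurable_pi_apply 0) (shift_meas k)]
        have : ((fun x : Fin N → EuclideanSpace ℝ (Fin d) => x 0) ∘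
              fun (x : Fin N → EuclideanSpace ℝ (Fin d)) i => x (i + k))
            = fun x => x (0 + k) := rfl
        rw [this]
        simpa using hmarg k
      rw [Measure.map_smul, map_sum_meas _ _ (measurable_pi_apply 0)]
      rw [Finset.sum_congr rfl (fun k _ => h0 k)]
      simp only [Finset.sum_const, Finset.card_univ, Fintype.card_fin]
      rw [← Nat.cast_smul_eq_nsmul ℝ≥0∞ N μ, smul_smul,
        ENNReal.inv_mul_cancel hNne hNtop, one_smul]
    · -- the integral is unchanged
      by_cases hI : Integrable c γ
      · have hIk : ∀ k ∈ Finset.univ, Integrable c (γ.map (fun x i => x (i + k))) :=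
          fun k _ => (hint_iff k).2 hI
        rw [integral_smul_measure, integral_finset_sum_measure hIk,
          Finset.sum_congr rfl (fun k _ => hint k)]
        simp only [Finset.sum_const, Finset.card_univ, Fintype.card_fin, nsmul_eq_mul]
        rw [toReal_inv, toReal_natCast, hr, smul_eq_mul, ← mul_assoc,
          inv_mul_cancel₀ (by exact_mod_cast NeZero.ne N), one_mul]
      · have hIs : ¬ Integrable c
            ((N : ℝ≥0∞)⁻¹ • ∑ k : Fin N, γ.map (fun x i => x (i + k))) := by
          intro h
          rw [integrable_smul_measure (ENNReal.inv_ne_zero.2 hNtop) (ENNReal.inv_ne_top.2 hNne),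
            integrable_finset_sum_measure] at h
          exact hI ((hint_iff 0).1 (h 0 (Finset.mem_univ 0)))
        rw [hr, integral_undef hI, integral_undef hIs]
  · -- a symmetric plan is a plan
    rintro ⟨γ, hγp, hcyc, h0, hr⟩
    refine ⟨γ, hγp, ?_, hr⟩
    open Fin.NatCast in
    have key : ∀ n : ℕ, γ.map (fun x => x ((n : Fin N))) = μ := by
      intro n
      induction n with
      | zero => simpa using h0
      | succ n ih =>
        have step : γ.map (fun x => x ((n : Fin N) + 1)) = γ.map (fun x => x (n : Fin N)) := by
          nth_rewrite 2 [← hcyc]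
          rw [Measure.map_map (measurable_pi_apply _) (shift_meas 1)]
          rfl
        have hcast : ((n + 1 : ℕ) : Fin N) = (n : Fin N) + 1 := by push_cast; ring
        rw [hcast, step, ih]
    intro i
    open Fin.NatCast in
    simpa [Fin.cast_val_eq_self] using key (i : ℕ)
end
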